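/- arXiv:math/0211414 — 5 statements merged into one kernel-verified Lean document; each statement's English description precedes it below -/
import Mathlib

section
/- If q(z1,z2,z3,z4) = (z1-z2)(z3-z4)/((z2-z3)(z4-z1)) = exp(-2iα) for 0 < α < π, and |z1-z2| = |z1-z4|, then |z3-z2| = |z3-z4|. -/
open Complex

theorem stmt_0 (α : ℝ) (hα : 0 < α ∧ α < Real.pi)
    (z1 z2 z3 z4 : ℂ) (h23 : z2 ≠ z3) (h41 : z4 ≠ z1)
    (hq : ((z1 - z2) * (z3 - z4)) / ((z2 - z3) * (z4 - z1)) =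
      Complex.exp (-2 * α * Complex.I))
    (hiso : ‖z1 - z2‖ = ‖z1 - z4‖) :
    ‖z3 - z2‖ = ‖z3 - z4‖ := by
  have hden : (z2 - z3) * (z4 - z1) ≠ 0 :=
    mul_ne_zero (sub_ne_zero.mpr h23) (sub_ne_zero.mpr h41)
  have heq : (z1 - z2) * (z3 - z4) =
      Complex.exp (-2 * α * Complex.I) * ((z2 - z3) * (z4 - z1)) := by
    exact (div_eq_iff hden).mp hq
  have habsexp : ‖Complex.exp (-2 * α * Complex.I)‖ = 1 := by
    rw [Complex.norm_exp]
    simp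
  have habs : ‖z1 - z2‖ * ‖z3 - z4‖ =
      ‖z2 - z3‖ * ‖z4 - z1‖ := by
    have := congrArg (‖·‖) heq
    rw [norm_mul, norm_mul, norm_mul, habsexp, one_mul] at this
    exact this
  have h12 : z1 ≠ z2 := by
    intro h
    apply h41
    have : ‖z1 - z4‖ = 0 := by
      rw [← hiso, h, sub_self, norm_zero]
    have := sub_eq_zero.mp (norm_eq_zero.mp this)
    exact this.symm
  have h12' : ‖z1 - z2‖ ≠ 0 := by
    simpa [sub_eq_zero] using h12
  have h14 : ‖z4 - z1‖ = ‖z1 - z2‖ := by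
    rw [hiso, norm_sub_rev]
  rw [h14, mul_comm (‖z2 - z3‖)] at habs
  have := mul_left_cancel₀ h12' habs
  rw [norm_sub_rev z3 z2, this.symm, norm_sub_rev]
end

section
/- If q(z1,z2,z3,z4) = exp(-2iα) for 0 < α < π, and the angle between the segments [z1,z2] and [z1,z4] is α with (z1,z2,z4) positively oriented (i.e. (z4-z1)/(z2-z1) = |(z4-z1)/(z2-z1)|·exp(iα)), then |z3-z2| = |z1-z2| and |z3-z4| = |z4-z1|. -/
open Complex

theorem stmt_1 (α : ℝ) (hα : 0 < α ∧ α < Real.pi)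
    (z1 z2 z3 z4 : ℂ) (h23 : z2 ≠ z3) (h41 : z4 ≠ z1) (h21 : z2 ≠ z1)
    (hq : ((z1 - z2) * (z3 - z4)) / ((z2 - z3) * (z4 - z1)) =
      Complex.exp (-2 * α * Complex.I))
    (hangle : (z4 - z1) / (z2 - z1) =
      (‖(z4 - z1) / (z2 - z1)‖ : ℂ) * Complex.exp (α * Complex.I)) :
    ‖z3 - z2‖ = ‖z1 - z2‖ ∧
    ‖z3 - z4‖ = ‖z4 - z1‖ := by
  obtain ⟨hα0, hαπ⟩ := hα
  have ha0 : z2 - z1 ≠ 0 := sub_ne_zero.mpr h21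
  have hb0 : z4 - z1 ≠ 0 := sub_ne_zero.mpr h41
  set e : ℂ := Complex.exp (α * Complex.I) with he
  have he0 : e ≠ 0 := Complex.exp_ne_zero _
  have habse : ‖e‖ = 1 := Complex.norm_exp_ofReal_mul_I α
  -- extract r
  obtain ⟨r, hr0, hb⟩ : ∃ r : ℝ, 0 < r ∧ z4 - z1 = (z2 - z1) * r * e := by
    refine ⟨‖(z4 - z1) / (z2 - z1)‖, ?_, ?_⟩
    · exact norm_pos_iff.mpr (div_ne_zero hb0 ha0)
    · rw [div_eq_iff ha0] at hangle
      linear_combination hangle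
  -- clear denominators in hq
  have hd : (z2 - z3) * (z4 - z1) ≠ 0 := mul_ne_zero (sub_ne_zero.mpr h23) hb0
  rw [div_eq_iff hd] at hq
  have hE : e * e * Complex.exp (-2 * α * Complex.I) = 1 := by
    rw [he, ← Complex.exp_add, ← Complex.exp_add, ← Complex.exp_zero]
    ring_nf
  have key : e * e * ((z1 - z2) * (z3 - z4)) = (z2 - z3) * (z4 - z1) := by
    linear_combination (e * e) * hq + ((z2 - z3) * (z4 - z1)) * hE
  have hz4 : z4 = z1 + (z2 - z1) * r * e := by linear_combination hb
  subst hz4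
  -- key identities
  have h32 : (z3 - z2) * ((r : ℂ) - e) = (z2 - z1) * e * (1 - r * e) := by
    have h32' : (z2 - z1) * e * ((z3 - z2) * ((r : ℂ) - e)) =
        (z2 - z1) * e * ((z2 - z1) * e * (1 - r * e)) := by
      linear_combination key
    exact mul_left_cancel₀ (mul_ne_zero ha0 he0) h32'
  have h34 : (z3 - (z1 + (z2 - z1) * r * e)) * ((r : ℂ) - e) =
      (z2 - z1) * r * (1 - e * r) := by
    have h34' : (z2 - z1) * e * ((z3 - (z1 + (z2 - z1) * r * e)) * ((r : ℂ) - e)) =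
        (z2 - z1) * e * ((z2 - z1) * r * (1 - e * r)) := by
      linear_combination key
    exact mul_left_cancel₀ (mul_ne_zero ha0 he0) h34'
  -- |r - e| = |1 - r e| ≠ 0
  have hsin : 0 < Real.sin α := Real.sin_pos_of_pos_of_lt_pi hα0 hαπ
  have hei : e = (Real.cos α : ℂ) + (Real.sin α : ℂ) * Complex.I := by
    rw [he, Complex.exp_mul_I, Complex.ofReal_cos, Complex.ofReal_sin]
  have hpyth := Real.sin_sq_add_cos_sq α
  have hsq : ‖(r : ℂ) - e‖ ^ 2 = ‖1 - (r : ℂ) * e‖ ^ 2 := by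
    rw [Complex.sq_norm, Complex.sq_norm, hei]
    simp [Complex.normSq_apply, Complex.cos_ofReal_re, Complex.sin_ofReal_re,
      Complex.cos_ofReal_im, Complex.sin_ofReal_im]
    linear_combination (1 - r ^ 2) * hpyth
  have habs : ‖(r : ℂ) - e‖ = ‖1 - (r : ℂ) * e‖ := by
    have h1 : Real.sqrt (‖(r : ℂ) - e‖ ^ 2) =
        Real.sqrt (‖1 - (r : ℂ) * e‖ ^ 2) := by rw [hsq]
    rwa [Real.sqrt_sq (norm_nonneg _), Real.sqrt_sq (norm_nonneg _)] at h1
  have hre0 : ‖(r : ℂ) - e‖ ≠ 0 := by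
    rw [norm_ne_zero_iff]
    intro h
    have him : ((r : ℂ) - e).im = 0 := by rw [h]; simp
    rw [hei] at him
    simp [Complex.cos_ofReal_im, Complex.sin_ofReal_re] at him
    linarith
  have habr : ‖((r : ℂ))‖ = r := by
    rw [Complex.norm_real, Real.norm_eq_abs, abs_of_pos hr0]
  constructor
  · have h := congrArg norm h32
    rw [norm_mul, norm_mul, norm_mul, habse, mul_one, ← habs] at h
    have h2 : ‖z3 - z2‖ = ‖z2 - z1‖ :=
      mul_right_cancel₀ hre0 h
    rw [h2, norm_sub_rev]
  · have h1er : ‖1 - e * (r : ℂ)‖ = ‖1 - (r : ℂ) * e‖ := by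
      ring_nf
    have h := congrArg norm h34
    rw [norm_mul, norm_mul, norm_mul, habr, h1er, ← habs] at h
    have h2 := mul_right_cancel₀ hre0 h
    rw [h2]
    rw [show z1 + (z2 - z1) * r * e - z1 = (z2 - z1) * r * e by ring]
    rw [norm_mul, norm_mul, habse, habr, mul_one]
end

section
/- Let R : ℤ² → ℝ be a function satisfying, for all relevant lattice points z = N + iM, the equation (N+M)(R(z+i)+R(z+1))(R(z)² - R(z+1)R(z-i) + cos(α)·R(z)(R(z-i)-R(z+1))) + (M-N)(R(z-i)+R(z+1))(R(z)² - R(z+1)R(z+i) + cos(α)·R(z)(R(z+i)-R(z+1))) = 0, where addition of 1 and i denotes shifts in N and M respectively. Then the function z ↦ 1/R(z) (assuming R is nowhere zero) satisfies the same equation with cos(α) replaced by cos(α) (i.e., this equation is invariant under R ↦ 1/R). -/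
/-- Equation (Ri) of the paper at the lattice point `z = N + iM`, with `t = cos α`. -/
def RiEq (t : ℝ) (R : ℤ → ℤ → ℝ) (N M : ℤ) : Prop :=
  ((N : ℝ) + (M : ℝ)) * (R N (M+1) + R (N+1) M) *
      ((R N M)^2 - R (N+1) M * R N (M-1) + t * R N M * (R N (M-1) - R (N+1) M))
  + ((M : ℝ) - (N : ℝ)) * (R N (M-1) + R (N+1) M) *
      ((R N M)^2 - R (N+1) M * R N (M+1) + t * R N M * (R N (M+1) - R (N+1) M)) = 0

theorem stmt_2 (α : ℝ) (R : ℤ → ℤ → ℝ) (hR : ∀ N M, R N M ≠ 0)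
    (h : ∀ N M, RiEq (Real.cos α) R N M) :
    ∀ N M, RiEq (Real.cos α) (fun N M => 1 / R N M) N M := by
  intro N M
  have h1 := h N M
  simp only [RiEq] at h1 ⊢
  have ha := hR N M
  have hb := hR (N+1) M
  have hc := hR N (M+1)
  have hd := hR N (M-1)
  set a := R N M
  set b := R (N+1) M
  set c := R N (M+1)
  set d := R N (M-1)
  have hden : a^2 * b^2 * c * d ≠ 0 := by positivity
  apply mul_left_cancel₀ hden
  rw [mul_zero]
  field_simp
  linear_combination (-1) * h1
end

section
/- Let R : ℤ² → ℝ be nowhere zero and satisfy, for parameter γ, the equation -M·R(z)R(z+1) + (N+1)·R(z+1)R(z+1+i) + (M+1)·R(z+1+i)R(z+i) - N·R(z+i)R(z) = (γ/2)(R(z)+R(z+1+i))(R(z+1)+R(z+i)) at a point z = N+iM. Then R̃ = 1/R satisfies the same equation at z with γ replaced by 2-γ. -/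
/-- Equation (square) of the paper at the lattice point `z = N + iM`, with parameter `γ`. -/
def SqEq (γ : ℝ) (R : ℤ → ℤ → ℝ) (N M : ℤ) : Prop :=
  -(M : ℝ) * R N M * R (N+1) M + ((N : ℝ) + 1) * R (N+1) M * R (N+1) (M+1)
    + ((M : ℝ) + 1) * R (N+1) (M+1) * R N (M+1) - (N : ℝ) * R N (M+1) * R N M
  = (γ / 2) * (R N M + R (N+1) (M+1)) * (R (N+1) M + R N (M+1))

lemma sqeq_aux (γ n m a b c d : ℝ) (ha : a ≠ 0) (hb : b ≠ 0) (hc : c ≠ 0) (hd : d ≠ 0)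
    (h : -m*a*b + (n+1)*b*c + (m+1)*c*d - n*d*a = γ/2*(a+c)*(b+d)) :
    -m*(1/a)*(1/b) + (n+1)*(1/b)*(1/c) + (m+1)*(1/c)*(1/d) - n*(1/d)*(1/a)
      = (2-γ)/2*(1/a+1/c)*(1/b+1/d) := by
  field_simp
  linear_combination (-2)*h

theorem stmt_3 (γ : ℝ) (R : ℤ → ℤ → ℝ) (hR : ∀ N M, R N M ≠ 0)
    (N M : ℤ) (h : SqEq γ R N M) :
    SqEq (2 - γ) (fun N M => 1 / R N M) N M := by
  unfold SqEq at h ⊢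
  exact sqeq_aux γ N M (R N M) (R (N+1) M) (R (N+1) (M+1)) (R N (M+1))
    (hR N M) (hR (N+1) M) (hR (N+1) (M+1)) (hR N (M+1)) h
end

section
/- Let 0 < γ < 2 and r(n+1) = ((2n+γ)/(2(n+1)-γ))·r(n) with r(0) = 1. Then r(n) ~ c·n^(γ-1) as n → ∞, where c = Γ(1-γ/2)/Γ(γ/2); that is, r(n)/n^(γ-1) tends to Γ(1-γ/2)/Γ(γ/2). -/
open Filter

theorem stmt_5 (γ : ℝ) (hγ : 0 < γ ∧ γ < 2) (r : ℕ → ℝ) (hr0 : r 0 = 1)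
    (hrec : ∀ n : ℕ, r (n+1) = ((2 * (n : ℝ) + γ) / (2 * ((n : ℝ) + 1) - γ)) * r n) :
    Tendsto (fun n : ℕ => r n / (n : ℝ) ^ (γ - 1)) atTop
      (nhds (Real.Gamma (1 - γ/2) / Real.Gamma (γ/2))) := by
  obtain ⟨hγ0, hγ2⟩ := hγ
  set a : ℝ := γ / 2 with ha
  set b : ℝ := 1 - γ / 2 with hb
  have ha0 : 0 < a := by positivity
  have hb0 : 0 < b := by simp only [hb]; linarith
  -- closed form for r
  have hprod : ∀ n : ℕ, r n = (∏ k ∈ Finset.range n, ((k : ℝ) + a)) /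
      (∏ k ∈ Finset.range n, ((k : ℝ) + b)) := by
    intro n
    induction n with
    | zero => simpa using hr0
    | succ n ih =>
      rw [hrec n, ih, Finset.prod_range_succ, Finset.prod_range_succ]
      have h1 : (2 * (n : ℝ) + γ) = 2 * ((n : ℝ) + a) := by simp [ha]; ring
      have h2 : (2 * ((n : ℝ) + 1) - γ) = 2 * ((n : ℝ) + b) := by simp [hb]; ring
      have hQb : (0:ℝ) < ∏ k ∈ Finset.range n, ((k : ℝ) + b) := by
        apply Finset.prod_pos; intro k _; positivity
      have hnb : (0:ℝ) < (n : ℝ) + b := by positivity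
      rw [h1, h2]
      field_simp
  have key : ∀ n : ℕ, 1 ≤ n → r n / (n : ℝ) ^ (γ - 1) =
      (Real.GammaSeq b n / Real.GammaSeq a n) * (((n : ℝ) + b) / ((n : ℝ) + a)) := by
    intro n hn
    have hnpos : (0:ℝ) < n := by exact_mod_cast hn
    have hQa : (0:ℝ) < ∏ k ∈ Finset.range n, ((k : ℝ) + a) := by
      apply Finset.prod_pos; intro k _; positivity
    have hQb : (0:ℝ) < ∏ k ∈ Finset.range n, ((k : ℝ) + b) := by
      apply Finset.prod_pos; intro k _; positivity
    have hPa : ∏ j ∈ Finset.range (n + 1), (a + (j : ℝ)) =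
        (∏ k ∈ Finset.range n, ((k : ℝ) + a)) * ((n : ℝ) + a) := by
      rw [Finset.prod_range_succ]
      congr 1
      · exact Finset.prod_congr rfl fun k _ => by ring
      · ring
    have hPb : ∏ j ∈ Finset.range (n + 1), (b + (j : ℝ)) =
        (∏ k ∈ Finset.range n, ((k : ℝ) + b)) * ((n : ℝ) + b) := by
      rw [Finset.prod_range_succ]
      congr 1
      · exact Finset.prod_congr rfl fun k _ => by ring
      · ring
    have hfact : (0:ℝ) < ((Nat.factorial n : ℕ) : ℝ) := by exact_mod_cast Nat.factorial_pos n
    have hra : (0:ℝ) < (n : ℝ) ^ a := Real.rpow_pos_of_pos hnpos a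
    have hrb : (0:ℝ) < (n : ℝ) ^ b := Real.rpow_pos_of_pos hnpos b
    have hgexp : (n : ℝ) ^ (γ - 1) = (n : ℝ) ^ a / (n : ℝ) ^ b := by
      rw [← Real.rpow_sub hnpos]
      congr 1
      simp [ha, hb]; ring
    rw [hprod n, Real.GammaSeq, Real.GammaSeq, hPa, hPb, hgexp]
    have hna : (0:ℝ) < (n : ℝ) + a := by positivity
    have hnb : (0:ℝ) < (n : ℝ) + b := by positivity
    field_simp
  have hGa : Real.Gamma a ≠ 0 := (Real.Gamma_pos_of_pos ha0).ne'
  have hlim : Tendsto (fun n : ℕ =>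
      (Real.GammaSeq b n / Real.GammaSeq a n) * (((n : ℝ) + b) / ((n : ℝ) + a))) atTop
      (nhds (Real.Gamma b / Real.Gamma a)) := by
    have h1 : Tendsto (fun n : ℕ => Real.GammaSeq b n / Real.GammaSeq a n) atTop
        (nhds (Real.Gamma b / Real.Gamma a)) :=
      (Real.GammaSeq_tendsto_Gamma b).div (Real.GammaSeq_tendsto_Gamma a) hGa
    have h2 : Tendsto (fun n : ℕ => ((n : ℝ) + b) / ((n : ℝ) + a)) atTop (nhds 1) := by
      have hden : Tendsto (fun n : ℕ => (n : ℝ) + a) atTop atTop :=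
        tendsto_atTop_add_const_right atTop a tendsto_natCast_atTop_atTop
      have := Filter.Tendsto.div_atTop (f := fun _ : ℕ => b - a) (l := atTop)
        tendsto_const_nhds hden
      have h3 : Tendsto (fun n : ℕ => 1 + (b - a) / ((n : ℝ) + a)) atTop (nhds (1 + 0)) :=
        tendsto_const_nhds.add this
      rw [add_zero] at h3
      apply h3.congr'
      filter_upwards [eventually_gt_atTop 0] with n hn
      have hna : (0:ℝ) < (n : ℝ) + a := by positivity
      field_simp
      ring
    simpa using h1.mul h2
  refine hlim.congr' ?_
  filter_upwards [eventually_ge_atTop 1] with n hn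
  exact (key n hn).symm
end
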